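/- arXiv:2509.24159 — 4 statements merged into one kernel-verified Lean document; each statement's English description precedes it below -/
import Mathlib

section
/- Let p₁,…,p_N ∈ (0,1), ℓ(η) = ∑ᵢ log(pᵢη + (1-pᵢ)(1-η)), and T(η) = (1/N) ∑ᵢ pᵢη/(pᵢη + (1-pᵢ)(1-η)). Then for all η ∈ (0,1), ℓ'(η) = (N/(η(1-η)))·(T(η) - η). In particular, η ∈ (0,1) is a stationary point of ℓ if and only if it is a fixed point of T. -/
theorem loglik_deriv_eq_em_gap (N : ℕ) (hN : 0 < N) (p : Fin N → ℝ)
    (hp : ∀ i, p i ∈ Set.Ioo (0:ℝ) 1) :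
    ∀ η ∈ Set.Ioo (0:ℝ) 1,
      deriv (fun x : ℝ => ∑ i, Real.log (p i * x + (1 - p i) * (1 - x))) η =
        ((N : ℝ) / (η * (1 - η))) *
          ((1 / (N : ℝ)) * ∑ i, p i * η / (p i * η + (1 - p i) * (1 - η)) - η) ∧
      (deriv (fun x : ℝ => ∑ i, Real.log (p i * x + (1 - p i) * (1 - x))) η = 0 ↔
        (1 / (N : ℝ)) * ∑ i, p i * η / (p i * η + (1 - p i) * (1 - η)) = η) := by
  intro η hη
  obtain ⟨hη0, hη1⟩ := hη
  have hη1' : (0:ℝ) < 1 - η := by linarith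
  have hd : ∀ i, (0:ℝ) < p i * η + (1 - p i) * (1 - η) := by
    intro i
    obtain ⟨h0, h1⟩ := hp i
    have : (0:ℝ) < p i * η := mul_pos h0 hη0
    have : (0:ℝ) < (1 - p i) * (1 - η) := mul_pos (by linarith) hη1'
    nlinarith
  -- derivative computation
  have hderiv : HasDerivAt (fun x : ℝ => ∑ i, Real.log (p i * x + (1 - p i) * (1 - x))) 
      (∑ i, (2 * p i - 1) / (p i * η + (1 - p i) * (1 - η))) η := by
    apply HasDerivAt.fun_sum
    intro i _
    have hlin : HasDerivAt (fun x : ℝ => p i * x + (1 - p i) * (1 - x))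
        (2 * p i - 1) η := by
      have h1 : HasDerivAt (fun x : ℝ => p i * x + (1 - p i) * (1 - x))
          (p i * 1 + (1 - p i) * (0 - 1)) η := by
        exact ((hasDerivAt_id η).const_mul (p i)).add
          (((hasDerivAt_const η 1).sub (hasDerivAt_id η)).const_mul (1 - p i))
      convert h1 using 1; ring
    have := (Real.hasDerivAt_log (ne_of_gt (hd i))).comp η hlin
    simpa [div_eq_inv_mul, Function.comp_def] using this
  have hD := hderiv.deriv
  have hkey : (∑ i, (2 * p i - 1) / (p i * η + (1 - p i) * (1 - η))) =
      ((N : ℝ) / (η * (1 - η))) *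
        ((1 / (N : ℝ)) * ∑ i, p i * η / (p i * η + (1 - p i) * (1 - η)) - η) := by
    have hN' : (N:ℝ) ≠ 0 := Nat.cast_ne_zero.mpr hN.ne'
    have hsub : (1 / (N:ℝ)) * ∑ i, (p i * η / (p i * η + (1 - p i) * (1 - η)) - η) =
        (1 / (N : ℝ)) * ∑ i, p i * η / (p i * η + (1 - p i) * (1 - η)) - η := by
      rw [Finset.sum_sub_distrib, mul_sub, Finset.sum_const]
      simp
      field_simp
    rw [← hsub, ← mul_assoc]
    have hNc : (N : ℝ) / (η * (1 - η)) * (1 / (N:ℝ)) = 1 / (η * (1 - η)) := by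
      field_simp
    rw [hNc, Finset.mul_sum]
    apply Finset.sum_congr rfl
    intro i _
    have hdne := (hd i).ne'
    have hηne := hη0.ne'
    have h1ne := hη1'.ne'
    field_simp
    ring
  constructor
  · rw [hD, hkey]
  · rw [hD, hkey]
    constructor
    · intro h
      have hc : (N : ℝ) / (η * (1 - η)) ≠ 0 := by
        apply div_ne_zero (Nat.cast_ne_zero.mpr hN.ne') (by positivity)
      have := (mul_eq_zero.mp h).resolve_left hc
      linarith
    · intro h
      rw [h]; ring
end

section
/- Let p₁,…,p_N ∈ (0,1) with at least one pⱼ ≠ 1/2, and T(η) = (1/N) ∑ᵢ pᵢη/(pᵢη + (1-pᵢ)(1-η)). Then T has at most one fixed point in (0,1). -/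
theorem em_fixed_point_unique (N : ℕ) (p : Fin N → ℝ) (hp : ∀ i, p i ∈ Set.Ioo (0:ℝ) 1)
    (hinf : ∃ j, p j ≠ 1 / 2)
    (η₁ η₂ : ℝ) (hη₁ : η₁ ∈ Set.Ioo (0:ℝ) 1) (hη₂ : η₂ ∈ Set.Ioo (0:ℝ) 1)
    (hfix₁ : (1 / (N : ℝ)) * ∑ i, p i * η₁ / (p i * η₁ + (1 - p i) * (1 - η₁)) = η₁)
    (hfix₂ : (1 / (N : ℝ)) * ∑ i, p i * η₂ / (p i * η₂ + (1 - p i) * (1 - η₂)) = η₂) :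
    η₁ = η₂ := by
  obtain ⟨j, hj⟩ := hinf
  have hNpos : 0 < N := j.pos
  have hN : (0:ℝ) < N := by exact_mod_cast hNpos
  obtain ⟨hη₁0, hη₁1⟩ := hη₁
  obtain ⟨hη₂0, hη₂1⟩ := hη₂
  have hdpos : ∀ (η : ℝ), 0 < η → η < 1 → ∀ i,
      0 < p i * η + (1 - p i) * (1 - η) := by
    intro η h0 h1 i
    have h2 := (hp i).1
    have h3 := (hp i).2
    nlinarith [mul_pos h2 h0, mul_pos (sub_pos.2 h3) (sub_pos.2 h1)]
  have hd1 := hdpos η₁ hη₁0 hη₁1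
  have hd2 := hdpos η₂ hη₂0 hη₂1
  have key : ∀ (η : ℝ), 0 < η → η < 1 →
      (1 / (N : ℝ)) * ∑ i, p i * η / (p i * η + (1 - p i) * (1 - η)) = η →
      ∑ i, (2 * p i - 1) / (p i * η + (1 - p i) * (1 - η)) = 0 := by
    intro η h0 h1 hfix
    have hd := hdpos η h0 h1
    have hsum : ∑ i, p i * η / (p i * η + (1 - p i) * (1 - η)) = N * η := by
      field_simp at hfix
      linarith
    have h2 : ∑ i, ((2 * p i - 1) / (p i * η + (1 - p i) * (1 - η))) * (η * (1 - η))
        = ∑ i, (p i * η / (p i * η + (1 - p i) * (1 - η)) - η) := by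
      apply Finset.sum_congr rfl
      intro i _
      have hne := (hd i).ne'
      field_simp
      ring
    rw [← Finset.sum_mul, Finset.sum_sub_distrib, hsum] at h2
    simp [Finset.card_univ] at h2
    rcases h2 with h2 | h2 | h2
    · exact h2
    · linarith
    · linarith
  have k1 := key η₁ hη₁0 hη₁1 hfix₁
  have k2 := key η₂ hη₂0 hη₂1 hfix₂
  have hmain : (η₂ - η₁) * ∑ i, (2 * p i - 1) ^ 2 /
      ((p i * η₁ + (1 - p i) * (1 - η₁)) * (p i * η₂ + (1 - p i) * (1 - η₂))) = 0 := by
    have hterm : ∀ i : Fin N,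
        (η₂ - η₁) * ((2 * p i - 1) ^ 2 /
          ((p i * η₁ + (1 - p i) * (1 - η₁)) * (p i * η₂ + (1 - p i) * (1 - η₂))))
        = (2 * p i - 1) / (p i * η₁ + (1 - p i) * (1 - η₁))
          - (2 * p i - 1) / (p i * η₂ + (1 - p i) * (1 - η₂)) := by
      intro i
      have h1 := (hd1 i).ne'
      have h2 := (hd2 i).ne'
      rw [div_sub_div _ _ h1 h2, ← mul_div_assoc, div_left_inj' (mul_ne_zero h1 h2)]
      ring
    rw [Finset.mul_sum]
    rw [Finset.sum_congr rfl fun i _ => hterm i, Finset.sum_sub_distrib, k1, k2]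
    ring
  have hS : 0 < ∑ i, (2 * p i - 1) ^ 2 /
      ((p i * η₁ + (1 - p i) * (1 - η₁)) * (p i * η₂ + (1 - p i) * (1 - η₂))) := by
    apply Finset.sum_pos'
    · intro i _
      exact div_nonneg (sq_nonneg _) (mul_pos (hd1 i) (hd2 i)).le
    · refine ⟨j, Finset.mem_univ j, ?_⟩
      have hj2 : 2 * p j - 1 ≠ 0 := by
        intro h; apply hj; linarith
      have hdd := mul_pos (hd1 j) (hd2 j)
      have hnum : 0 < (2 * p j - 1) ^ 2 := by
        rcases hj2.lt_or_gt with h | h <;> nlinarith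
      exact div_pos hnum hdd
  have := mul_eq_zero.1 hmain
  rcases this with h | h
  · linarith
  · linarith
end

section
/- Let p₁,…,p_N ∈ (0,1) with at least one pⱼ ≠ 1/2, and T(η) = (1/N) ∑ᵢ pᵢη/(pᵢη+(1-pᵢ)(1-η)). Let η̂ ∈ (0,1) be the (unique) fixed point of T. Then for η < η̂ we have T(η) > η, and for η > η̂ we have T(η) < η. -/
theorem em_gap_sign (N : ℕ) (hN : 0 < N) (p : Fin N → ℝ)
    (hp : ∀ i, p i ∈ Set.Ioo (0:ℝ) 1) (hinf : ∃ j, p j ≠ 1 / 2)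
    (ηhat : ℝ) (hηhat : ηhat ∈ Set.Ioo (0:ℝ) 1)
    (hfix : (1 / (N : ℝ)) * ∑ i, p i * ηhat / (p i * ηhat + (1 - p i) * (1 - ηhat)) = ηhat) :
    ∀ η ∈ Set.Ioo (0:ℝ) 1,
      (η < ηhat → η < (1 / (N : ℝ)) * ∑ i, p i * η / (p i * η + (1 - p i) * (1 - η))) ∧
      (ηhat < η → (1 / (N : ℝ)) * ∑ i, p i * η / (p i * η + (1 - p i) * (1 - η)) < η) := by
  have hNpos : (0:ℝ) < N := by exact_mod_cast hN
  have hdpos : ∀ x ∈ Set.Ioo (0:ℝ) 1, ∀ i : Fin N,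
      0 < p i * x + (1 - p i) * (1 - x) := by
    intro x hx i
    nlinarith [hx.1, hx.2, (hp i).1, (hp i).2]
  -- key identity: T(x) - x = x(1-x)/N * S(x)
  have key : ∀ x ∈ Set.Ioo (0:ℝ) 1,
      (1 / (N : ℝ)) * ∑ i, p i * x / (p i * x + (1 - p i) * (1 - x)) - x
        = x * (1 - x) / N * ∑ i, (2 * p i - 1) / (p i * x + (1 - p i) * (1 - x)) := by
    intro x hx
    have hsum : ∑ i, (p i * x / (p i * x + (1 - p i) * (1 - x)) - x)
        = x * (1 - x) * ∑ i, (2 * p i - 1) / (p i * x + (1 - p i) * (1 - x)) := by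
      rw [Finset.mul_sum]
      refine Finset.sum_congr rfl fun i _ => ?_
      have hd := (hdpos x hx i).ne'
      field_simp
      ring
    rw [Finset.sum_sub_distrib, Finset.sum_const, Finset.card_fin, nsmul_eq_mul] at hsum
    have hNne : (N:ℝ) ≠ 0 := hNpos.ne'
    calc (1 / (N : ℝ)) * ∑ i, p i * x / (p i * x + (1 - p i) * (1 - x)) - x
        = (1 / (N : ℝ)) * ((∑ i, p i * x / (p i * x + (1 - p i) * (1 - x))) - N * x) := by
          rw [mul_sub, ← mul_assoc, one_div_mul_cancel hNne, one_mul]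
      _ = (1 / (N : ℝ)) * (x * (1 - x) * ∑ i, (2 * p i - 1) / (p i * x + (1 - p i) * (1 - x))) := by
          rw [hsum]
      _ = x * (1 - x) / N * ∑ i, (2 * p i - 1) / (p i * x + (1 - p i) * (1 - x)) := by ring
  -- strict monotonicity of S
  have Smono : ∀ x ∈ Set.Ioo (0:ℝ) 1, ∀ y ∈ Set.Ioo (0:ℝ) 1, x < y →
      ∑ i, (2 * p i - 1) / (p i * y + (1 - p i) * (1 - y))
        < ∑ i, (2 * p i - 1) / (p i * x + (1 - p i) * (1 - x)) := by
    intro x hx y hy hxy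
    obtain ⟨j, hj⟩ := hinf
    have hterm : ∀ i : Fin N, (2 * p i - 1) / (p i * y + (1 - p i) * (1 - y))
        ≤ (2 * p i - 1) / (p i * x + (1 - p i) * (1 - x)) := by
      intro i
      have hdx := hdpos x hx i
      have hdy := hdpos y hy i
      rw [div_le_div_iff₀ hdy hdx]
      nlinarith [mul_nonneg (sq_nonneg (2 * p i - 1)) (sub_nonneg.mpr hxy.le)]
    have hstrict : (2 * p j - 1) / (p j * y + (1 - p j) * (1 - y))
        < (2 * p j - 1) / (p j * x + (1 - p j) * (1 - x)) := by
      have hdx := hdpos x hx j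
      have hdy := hdpos y hy j
      have hc : (2 * p j - 1) ≠ 0 := by
        intro h; apply hj; linarith
      rw [div_lt_div_iff₀ hdy hdx]
      nlinarith [mul_pos (sub_pos.mpr hxy) (mul_self_pos.mpr hc)]
    exact Finset.sum_lt_sum (fun i _ => hterm i) ⟨j, Finset.mem_univ j, hstrict⟩
  -- S ηhat = 0
  have hS0 : ∑ i, (2 * p i - 1) / (p i * ηhat + (1 - p i) * (1 - ηhat)) = 0 := by
    have hk := key ηhat hηhat
    rw [hfix, sub_self] at hk
    have hpos : 0 < ηhat * (1 - ηhat) / N :=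
      div_pos (mul_pos hηhat.1 (by linarith [hηhat.2])) hNpos
    have := hk.symm
    rcases mul_eq_zero.mp this with h | h
    · exact absurd h hpos.ne'
    · exact h
  intro η hη
  constructor
  · intro hlt
    have hS : 0 < ∑ i, (2 * p i - 1) / (p i * η + (1 - p i) * (1 - η)) := by
      have := Smono η hη ηhat hηhat hlt
      linarith [hS0 ▸ this]
    have hk := key η hη
    have hpos : 0 < η * (1 - η) / N :=
      div_pos (mul_pos hη.1 (by linarith [hη.2])) hNpos
    nlinarith [mul_pos hpos hS]
  · intro hlt
    have hS : ∑ i, (2 * p i - 1) / (p i * η + (1 - p i) * (1 - η)) < 0 := by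
      have := Smono ηhat hηhat η hη hlt
      linarith [hS0 ▸ this]
    have hk := key η hη
    have hpos : 0 < η * (1 - η) / N :=
      div_pos (mul_pos hη.1 (by linarith [hη.2])) hNpos
    nlinarith [mul_neg_of_pos_of_neg hpos hS]
end

section
/- Let p₁,…,p_N ∈ (0,1) with at least one pⱼ ≠ 1/2, T(η) = (1/N) ∑ᵢ pᵢη/(pᵢη+(1-pᵢ)(1-η)), and η̂ its unique fixed point in (0,1). Then for any initialization η⁽⁰⁾ ∈ (0,1), the iterates η⁽ᵗ⁺¹⁾ = T(η⁽ᵗ⁾) converge to η̂ as t → ∞. -/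
open Filter

private lemma em_d_pos {p η : ℝ} (hp0 : 0 < p) (hp1 : p < 1) (h0 : 0 ≤ η) (h1 : η ≤ 1) :
    0 < p * η + (1 - p) * (1 - η) := by
  nlinarith [mul_nonneg (sub_nonneg.2 h1) (sq_nonneg (1 - p)), mul_nonneg h0 (sq_nonneg p),
    mul_pos hp0 (by linarith : (0:ℝ) < 1 - p)]

private lemma em_term_mono {p x y : ℝ} (hp0 : 0 < p) (hp1 : p < 1) (h0 : 0 ≤ x) (h1 : y ≤ 1)
    (hxy : x < y) :
    p * x / (p * x + (1 - p) * (1 - x)) ≤ p * y / (p * y + (1 - p) * (1 - y)) := by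
  have hdx : 0 < p * x + (1 - p) * (1 - x) := em_d_pos hp0 hp1 h0 (by linarith)
  have hdy : 0 < p * y + (1 - p) * (1 - y) := em_d_pos hp0 hp1 (by linarith) h1
  rw [div_le_div_iff₀ hdx hdy]
  nlinarith [mul_pos (mul_pos hp0 (by linarith : (0:ℝ) < 1 - p)) (by linarith : (0:ℝ) < y - x)]

private lemma em_frac_sub {p η : ℝ} (hd : p * η + (1 - p) * (1 - η) ≠ 0) :
    p * η / (p * η + (1 - p) * (1 - η)) =
      η * (1 - η) * ((2 * p - 1) / (p * η + (1 - p) * (1 - η))) + η := by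
  field_simp
  ring

private lemma em_slope_le {p x y : ℝ} (hp0 : 0 < p) (hp1 : p < 1) (h0 : 0 ≤ x) (h1 : y ≤ 1)
    (hxy : x ≤ y) :
    (2 * p - 1) / (p * y + (1 - p) * (1 - y)) ≤ (2 * p - 1) / (p * x + (1 - p) * (1 - x)) := by
  have hdx : 0 < p * x + (1 - p) * (1 - x) := em_d_pos hp0 hp1 h0 (by linarith)
  have hdy : 0 < p * y + (1 - p) * (1 - y) := em_d_pos hp0 hp1 (by linarith) h1
  rw [div_le_div_iff₀ hdy hdx]
  nlinarith [mul_nonneg (sq_nonneg (2 * p - 1)) (by linarith : (0:ℝ) ≤ y - x)]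

private lemma em_slope_lt {p x y : ℝ} (hp0 : 0 < p) (hp1 : p < 1) (hp2 : p ≠ 1 / 2)
    (h0 : 0 ≤ x) (h1 : y ≤ 1) (hxy : x < y) :
    (2 * p - 1) / (p * y + (1 - p) * (1 - y)) < (2 * p - 1) / (p * x + (1 - p) * (1 - x)) := by
  have hdx : 0 < p * x + (1 - p) * (1 - x) := em_d_pos hp0 hp1 h0 (by linarith)
  have hdy : 0 < p * y + (1 - p) * (1 - y) := em_d_pos hp0 hp1 (by linarith) h1
  have hc : (2 * p - 1) ≠ 0 := by
    intro h; apply hp2; linarith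
  have hc2 : 0 < (2 * p - 1) ^ 2 := by positivity
  rw [div_lt_div_iff₀ hdy hdx]
  nlinarith [mul_pos hc2 (by linarith : (0:ℝ) < y - x)]

theorem em_iterates_converge (N : ℕ) (hN : 0 < N) (p : Fin N → ℝ)
    (hp : ∀ i, p i ∈ Set.Ioo (0:ℝ) 1) (hinf : ∃ j, p j ≠ 1 / 2)
    (T : ℝ → ℝ)
    (hT : ∀ η, T η = (1 / (N : ℝ)) * ∑ i, p i * η / (p i * η + (1 - p i) * (1 - η)))
    (ηhat : ℝ) (hηhat : ηhat ∈ Set.Ioo (0:ℝ) 1) (hfix : T ηhat = ηhat)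
    (a : ℕ → ℝ) (ha0 : a 0 ∈ Set.Ioo (0:ℝ) 1) (hrec : ∀ t, a (t + 1) = T (a t)) :
    Filter.Tendsto a Filter.atTop (nhds ηhat) := by
  obtain ⟨ha01, ha02⟩ := ha0
  obtain ⟨hh1, hh2⟩ := hηhat
  have hN0 : (0:ℝ) < (N:ℝ) := by exact_mod_cast hN
  set h : ℝ → ℝ := fun η => ∑ i, (2 * p i - 1) / (p i * η + (1 - p i) * (1 - η)) with hhdef
  have hd : ∀ (i : Fin N) (η : ℝ), 0 ≤ η → η ≤ 1 → 0 < p i * η + (1 - p i) * (1 - η) :=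
    fun i η h0 h1 => em_d_pos (hp i).1 (hp i).2 h0 h1
  -- key identity
  have hTsub : ∀ η : ℝ, 0 ≤ η → η ≤ 1 → T η - η = η * (1 - η) / (N : ℝ) * h η := by
    intro η h0 h1
    rw [hT]
    have hsum : ∑ i, p i * η / (p i * η + (1 - p i) * (1 - η))
        = η * (1 - η) * h η + (N : ℝ) * η := by
      simp only [hhdef]
      rw [Finset.sum_congr rfl
        (fun i _ => em_frac_sub (ne_of_gt (hd i η h0 h1)))]
      rw [Finset.sum_add_distrib, Finset.sum_const, Finset.card_univ,
        Fintype.card_fin, nsmul_eq_mul, Finset.mul_sum]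
    rw [hsum]
    field_simp
    ring
  -- h ηhat = 0
  have hhat0 : h ηhat = 0 := by
    have h1 := hTsub ηhat hh1.le hh2.le
    rw [hfix, sub_self] at h1
    have hpos : 0 < ηhat * (1 - ηhat) / (N : ℝ) :=
      div_pos (mul_pos hh1 (by linarith)) hN0
    rcases mul_eq_zero.1 h1.symm with h2 | h2
    · exact absurd h2 (ne_of_gt hpos)
    · exact h2
  -- h strictly antitone
  have hanti : ∀ x y : ℝ, 0 ≤ x → y ≤ 1 → x < y → h y < h x := by
    intro x y h0 h1 hxy
    obtain ⟨j, hj⟩ := hinf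
    apply Finset.sum_lt_sum
    · intro i _
      exact em_slope_le (hp i).1 (hp i).2 h0 h1 hxy.le
    · exact ⟨j, Finset.mem_univ j, em_slope_lt (hp j).1 (hp j).2 hj h0 h1 hxy⟩
  -- uniqueness of fixed point in (0,1)
  have huniq : ∀ L : ℝ, 0 < L → L < 1 → T L = L → L = ηhat := by
    intro L hL0 hL1 hfixL
    have h1 := hTsub L hL0.le hL1.le
    rw [hfixL, sub_self] at h1
    have hpos : 0 < L * (1 - L) / (N : ℝ) :=
      div_pos (mul_pos hL0 (by linarith)) hN0
    have hL : h L = 0 := by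
      rcases mul_eq_zero.1 h1.symm with h2 | h2
      · exact absurd h2 (ne_of_gt hpos)
      · exact h2
    rcases lt_trichotomy L ηhat with hc | hc | hc
    · have := hanti L ηhat hL0.le hh2.le hc
      rw [hL, hhat0] at this; linarith
    · exact hc
    · have := hanti ηhat L hh1.le hL1.le hc
      rw [hL, hhat0] at this; linarith
  -- monotonicity of T
  have hTmono : ∀ x y : ℝ, 0 ≤ x → y ≤ 1 → x ≤ y → T x ≤ T y := by
    intro x y h0 h1 hxy
    rw [hT, hT]
    apply mul_le_mul_of_nonneg_left _ (by positivity)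
    apply Finset.sum_le_sum
    intro i _
    rcases eq_or_lt_of_le hxy with rfl | hlt
    · exact le_refl _
    · exact em_term_mono (hp i).1 (hp i).2 h0 h1 hlt
  -- sign of T η - η
  have hsign_lt : ∀ η : ℝ, 0 < η → η < ηhat → η ≤ T η := by
    intro η h0 h1
    have hid := hTsub η h0.le (by linarith)
    have hη : 0 < h η := by
      have := hanti η ηhat h0.le hh2.le h1
      rw [hhat0] at this; linarith
    have hfac : 0 ≤ η * (1 - η) / (N:ℝ) :=
      div_nonneg (mul_nonneg h0.le (by linarith : (0:ℝ) ≤ 1 - η)) hN0.le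
    nlinarith [mul_nonneg hfac hη.le]
  have hsign_gt : ∀ η : ℝ, ηhat < η → η < 1 → T η ≤ η := by
    intro η h1 h2
    have hid := hTsub η (by linarith) h2.le
    have hη : h η < 0 := by
      have := hanti ηhat η hh1.le h2.le h1
      rw [hhat0] at this; linarith
    have hfac : 0 ≤ η * (1 - η) / (N:ℝ) :=
      div_nonneg (mul_nonneg (by linarith : (0:ℝ) ≤ η) (by linarith : (0:ℝ) ≤ 1 - η)) hN0.le
    nlinarith [mul_nonpos_of_nonneg_of_nonpos hfac hη.le]
  -- continuity of T on (0,1)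
  have hTcont : ∀ L : ℝ, 0 < L → L < 1 → ContinuousAt T L := by
    intro L hL0 hL1
    have hTfun : T = fun η => (1 / (N : ℝ)) * ∑ i, p i * η / (p i * η + (1 - p i) * (1 - η)) :=
      funext hT
    rw [hTfun]
    apply ContinuousAt.mul continuousAt_const
    have : ∀ i : Fin N, ContinuousAt
        (fun η : ℝ => p i * η / (p i * η + (1 - p i) * (1 - η))) L :=
      fun i => ContinuousAt.div (by fun_prop) (by fun_prop) (ne_of_gt (hd i L hL0.le hL1.le))
    exact tendsto_finset_sum _ (fun i _ => this i)
  -- the limit of a convergent orbit is a fixed point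
  have hlimfix : ∀ L : ℝ, 0 < L → L < 1 → Tendsto a atTop (nhds L) → T L = L := by
    intro L hL0 hL1 htend
    have h1 : Tendsto (fun t => a (t + 1)) atTop (nhds L) :=
      htend.comp (tendsto_add_atTop_nat 1)
    have h2 : Tendsto (fun t => T (a t)) atTop (nhds (T L)) :=
      ((hTcont L hL0 hL1).tendsto).comp htend
    have heq : (fun t => a (t + 1)) = fun t => T (a t) := funext hrec
    exact tendsto_nhds_unique h2 (heq ▸ h1)
  rcases lt_trichotomy (a 0) ηhat with hc | hc | hc
  · -- increasing case
    have key : ∀ t, a 0 ≤ a t ∧ a t ≤ ηhat := by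
      intro t
      induction t with
      | zero => exact ⟨le_refl _, hc.le⟩
      | succ t ih =>
        obtain ⟨k1, k2⟩ := ih
        have hat0 : 0 < a t := lt_of_lt_of_le ha01 k1
        have hat1 : a t ≤ 1 := le_trans k2 hh2.le
        have hub : a (t + 1) ≤ ηhat := by
          rw [hrec]
          calc T (a t) ≤ T ηhat := hTmono _ _ hat0.le hh2.le k2
            _ = ηhat := hfix
        refine ⟨?_, hub⟩
        rcases eq_or_lt_of_le k2 with heq | hlt
        · rw [hrec, heq, hfix]; exact hc.le
        · rw [hrec]; exact le_trans k1 (hsign_lt _ hat0 hlt)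
    have hstep : ∀ t, a t ≤ a (t + 1) := by
      intro t
      obtain ⟨k1, k2⟩ := key t
      have hat0 : 0 < a t := lt_of_lt_of_le ha01 k1
      rcases eq_or_lt_of_le k2 with heq | hlt
      · rw [hrec, heq, hfix]
      · rw [hrec]; exact hsign_lt _ hat0 hlt
    have hmonoa : Monotone a := monotone_nat_of_le_succ hstep
    have hbdd : BddAbove (Set.range a) := ⟨ηhat, by
      rintro x ⟨t, rfl⟩; exact (key t).2⟩
    have htend : Tendsto a atTop (nhds (⨆ t, a t)) := tendsto_atTop_ciSup hmonoa hbdd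
    have hL1 : a 0 ≤ ⨆ t, a t := le_ciSup hbdd 0
    have hL2 : (⨆ t, a t) ≤ ηhat := ciSup_le (fun t => (key t).2)
    have hLfix : T (⨆ t, a t) = ⨆ t, a t :=
      hlimfix _ (lt_of_lt_of_le ha01 hL1) (lt_of_le_of_lt hL2 hh2) htend
    have : (⨆ t, a t) = ηhat :=
      huniq _ (lt_of_lt_of_le ha01 hL1) (lt_of_le_of_lt hL2 hh2) hLfix
    rwa [this] at htend
  · -- constant case
    have : ∀ t, a t = ηhat := by
      intro t
      induction t with
      | zero => exact hc
      | succ t ih => rw [hrec, ih, hfix]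
    have : a = fun _ => ηhat := funext this
    rw [this]
    exact tendsto_const_nhds
  · -- decreasing case
    have key : ∀ t, ηhat ≤ a t ∧ a t ≤ a 0 := by
      intro t
      induction t with
      | zero => exact ⟨hc.le, le_refl _⟩
      | succ t ih =>
        obtain ⟨k1, k2⟩ := ih
        have hat1 : a t < 1 := lt_of_le_of_lt k2 ha02
        have hat0 : 0 ≤ a t := le_trans hh1.le k1
        have hlb : ηhat ≤ a (t + 1) := by
          rw [hrec]
          calc ηhat = T ηhat := hfix.symm
            _ ≤ T (a t) := hTmono _ _ hh1.le hat1.le k1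
        refine ⟨hlb, ?_⟩
        rcases eq_or_lt_of_le k1 with heq | hlt
        · rw [hrec, ← heq, hfix]; exact hc.le
        · rw [hrec]; exact le_trans (hsign_gt _ hlt hat1) k2
    have hstep : ∀ t, a (t + 1) ≤ a t := by
      intro t
      obtain ⟨k1, k2⟩ := key t
      have hat1 : a t < 1 := lt_of_le_of_lt k2 ha02
      rcases eq_or_lt_of_le k1 with heq | hlt
      · rw [hrec, ← heq, hfix]
      · rw [hrec]; exact hsign_gt _ hlt hat1
    have hmonoa : Antitone a := antitone_nat_of_succ_le hstep
    have hbdd : BddBelow (Set.range a) := ⟨ηhat, by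
      rintro x ⟨t, rfl⟩; exact (key t).1⟩
    have htend : Tendsto a atTop (nhds (⨅ t, a t)) := tendsto_atTop_ciInf hmonoa hbdd
    have hL1 : (⨅ t, a t) ≤ a 0 := ciInf_le hbdd 0
    have hL2 : ηhat ≤ ⨅ t, a t := le_ciInf (fun t => (key t).1)
    have hLfix : T (⨅ t, a t) = ⨅ t, a t :=
      hlimfix _ (lt_of_lt_of_le hh1 hL2) (lt_of_le_of_lt hL1 ha02) htend
    have : (⨅ t, a t) = ηhat :=
      huniq _ (lt_of_lt_of_le hh1 hL2) (lt_of_le_of_lt hL1 ha02) hLfix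
    rwa [this] at htend
end
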